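/- Let r ≥ 2 and k = C(r,2), and let C be a k×r binary matrix whose rows are pairwise distinct and each of Hamming weight 2 (so the rows are exactly all binary r-tuples of weight 2). Let E = C·Cᵀ − 2I_k (which is a binary matrix). Then the block matrix Q₁(r) = [[I_k, C, E], [0, I_r, Cᵀ]] of size (k+r) × (2k+r) is uniquely identifying (UI). -/

import Mathlib

/-- For `r ≥ 2`, `k = C(r,2)`, and `C` a `k×r` binary matrix with pairwise
distinct rows each of Hamming weight 2, letting `E = C·Cᵀ − 2·I_k`, the block matrix
`Q₁(r) = [[I_k, C, E], [0, I_r, Cᵀ]]` is uniquely identifying. -/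
theorem stmt4 (r k : ℕ) (hr : 2 ≤ r) (hk : k = r.choose 2)
    (C : Matrix (Fin k) (Fin r) ℤ)
    (hCbin : ∀ i j, C i j = 0 ∨ C i j = 1)
    (hdistinct : Function.Injective (fun i : Fin k => (fun j => C i j)))
    (hweight : ∀ i, (∑ j, C i j) = 2)
    (E : Matrix (Fin k) (Fin k) ℤ)
    (hE : E = C * C.transpose - 2)
    (Q : Matrix (Fin k ⊕ Fin r) (Fin k ⊕ (Fin r ⊕ Fin k)) ℤ)
    (hQ : Q = Matrix.fromBlocks 1 (Matrix.fromCols C E) 0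
      (Matrix.fromCols 1 C.transpose)) :
    ∀ z : Fin k ⊕ (Fin r ⊕ Fin k) → ℤ, (∀ j, z j = -1 ∨ z j = 0 ∨ z j = 1) →
      Q.mulVec z = 0 → z = 0 := by
  intro z hz hmul
  set x : Fin k → ℤ := fun j => z (Sum.inl j) with hx
  set y : Fin r → ℤ := fun j => z (Sum.inr (Sum.inl j)) with hy
  set w : Fin k → ℤ := fun j => z (Sum.inr (Sum.inr j)) with hw
  have hzdecomp : z = Sum.elim x (Sum.elim y w) := by
    funext j; rcases j with j | j | j <;> rfl
  rw [hzdecomp, hQ, Matrix.fromBlocks_mulVec] at hmul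
  simp only [Sum.elim_comp_inl, Sum.elim_comp_inr] at hmul
  rw [Matrix.fromCols_mulVec_sumElim, Matrix.fromCols_mulVec_sumElim] at hmul
  simp only [Matrix.one_mulVec, Matrix.zero_mulVec, zero_add] at hmul
  have h1 : x + (C.mulVec y + E.mulVec w) = 0 := by
    funext i; exact congrFun hmul (Sum.inl i)
  have h2 : y + C.transpose.mulVec w = 0 := by
    funext i; exact congrFun hmul (Sum.inr i)
  have hCtw : C.transpose.mulVec w = -y := by
    have := h2; linear_combination (norm := abel) this
  have hEw : E.mulVec w = -(C.mulVec y) - (2 : ℤ) • w := by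
    rw [hE, Matrix.sub_mulVec, ← Matrix.mulVec_mulVec, hCtw]
    have h2m : ((2 : Matrix (Fin k) (Fin k) ℤ)).mulVec w = (2 : ℤ) • w := by
      have : (2 : Matrix (Fin k) (Fin k) ℤ) = (2 : ℤ) • (1 : Matrix (Fin k) (Fin k) ℤ) := by
        simp
      rw [this, Matrix.smul_mulVec, Matrix.one_mulVec]
    rw [h2m, Matrix.mulVec_neg]
  have hxw : ∀ i, x i = 2 * w i := by
    intro i
    have := congrFun h1 i
    simp only [Pi.add_apply, Pi.zero_apply, hEw, Pi.sub_apply, Pi.neg_apply,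
      Pi.smul_apply, smul_eq_mul] at this
    linarith
  have hw0 : ∀ i, w i = 0 := by
    intro i
    have h1 := hz (Sum.inl i)
    have h2 := hz (Sum.inr (Sum.inr i))
    have := hxw i
    simp only [hx, hw] at *
    omega
  have hx0 : ∀ i, x i = 0 := fun i => by rw [hxw i, hw0 i]; ring
  have hy0 : ∀ i, y i = 0 := by
    have hwz : w = 0 := funext hw0
    rw [hwz, Matrix.mulVec_zero] at hCtw
    intro i
    have := congrFun hCtw i
    simp only [Pi.zero_apply, Pi.neg_apply] at this
    linarith
  funext j
  rcases j with j | j | j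
  · exact hx0 j
  · exact hy0 j
  · exact hw0 j
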